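/- Let n ∈ ℕ₊, α ∈ (0,1), δ ≥ 0, let H̃ ∈ ℝ^{n×n} be symmetric positive semidefinite, λ ≥ 0, Ω = [I, −I] ∈ ℝ^{n×2n}, τ > 0, and let x, s, x̃, s̃ ∈ ℝ^{2n} have all components positive. Assume ‖x ⊙ s − τe‖ ≤ ατ, assume x̃ᵢ/xᵢ ∈ [1/(1+δ), 1+δ] and s̃ᵢ/sᵢ ∈ [1/(1+δ), 1+δ] for every i, and suppose Δz ∈ ℝ^n and Δx, Δs ∈ ℝ^{2n} satisfy the approximated Newton system: 2λH̃Δz + ΩΔx = 0, ΩᵀΔz + Δs = 0, and s̃ ⊙ Δx + x̃ ⊙ Δs = τe − x ⊙ s. Set x⁺ = x + Δx and s⁺ = s + Δs. Then ‖x⁺ ⊙ s⁺ − τe‖ ≤ στ, where σ = √2·δ·(1+δ)²·α·√((1+α)/(1−α)) + (1+δ)²·α²/(2(1−α)). -/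

import Mathlib

open Matrix

/-- Euclidean norm of a finitely-indexed real vector. -/
noncomputable def euclEnorm {ι : Type*} [Fintype ι] (v : ι → ℝ) : ℝ :=
  Real.sqrt (∑ i, v i ^ 2)

lemma enorm_eq_norm {ι : Type*} [Fintype ι] (v : ι → ℝ) :
    euclEnorm v = ‖(WithLp.equiv 2 (ι → ℝ)).symm v‖ := by
  rw [EuclideanSpace.norm_eq]
  simp [euclEnorm, Real.norm_eq_abs, sq_abs]

lemma enorm_triangle {ι : Type*} [Fintype ι] (a b : ι → ℝ) :
    euclEnorm (fun i => a i + b i) ≤ euclEnorm a + euclEnorm b := by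
  have h := norm_add_le ((WithLp.equiv 2 (ι → ℝ)).symm a) ((WithLp.equiv 2 (ι → ℝ)).symm b)
  rw [← enorm_eq_norm, ← enorm_eq_norm] at h
  have h2 : (WithLp.equiv 2 (ι → ℝ)).symm a + (WithLp.equiv 2 (ι → ℝ)).symm b
      = (WithLp.equiv 2 (ι → ℝ)).symm (fun i => a i + b i) := rfl
  rw [h2, ← enorm_eq_norm] at h
  exact h

lemma enorm_le_of_sq_le {ι : Type*} [Fintype ι] {v : ι → ℝ} {t : ℝ} (ht : 0 ≤ t)
    (h : ∑ i, v i ^ 2 ≤ t ^ 2) : euclEnorm v ≤ t := by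
  rw [euclEnorm]
  calc Real.sqrt (∑ i, v i ^ 2) ≤ Real.sqrt (t ^ 2) := Real.sqrt_le_sqrt h
  _ = t := by rw [Real.sqrt_sq ht]

lemma weighted_abs_sum_le {ι : Type*} [Fintype ι] (a b m : ι → ℝ) (hm : ∀ i, 0 < m i)
    (h : 0 ≤ ∑ i, a i * b i / m i) :
    ∑ i, |a i * b i / m i| ≤ (∑ i, (a i + b i) ^ 2 / m i) / 2 := by
  classical
  have key : ∀ i, a i * b i / m i ≤ ((a i + b i) ^ 2 / m i) / 4 := by
    intro i
    rw [div_div, div_le_div_iff₀ (hm i) (mul_pos (hm i) four_pos)]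
    nlinarith [mul_nonneg (hm i).le (sq_nonneg (a i - b i))]
  have hsplit := Finset.sum_filter_add_sum_filter_not Finset.univ
    (fun i => 0 ≤ a i * b i / m i) (fun i => a i * b i / m i)
  have habs : ∑ i, |a i * b i / m i|
      = (∑ i ∈ Finset.univ.filter (fun i => 0 ≤ a i * b i / m i), a i * b i / m i)
        - ∑ i ∈ Finset.univ.filter (fun i => ¬ 0 ≤ a i * b i / m i), a i * b i / m i := by
    rw [← Finset.sum_filter_add_sum_filter_not Finset.univ
      (fun i => 0 ≤ a i * b i / m i) (fun i => |a i * b i / m i|)]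
    rw [sub_eq_add_neg, ← Finset.sum_neg_distrib]
    congr 1
    · exact Finset.sum_congr rfl (fun i hi => abs_of_nonneg (Finset.mem_filter.mp hi).2)
    · exact Finset.sum_congr rfl (fun i hi =>
        abs_of_neg (lt_of_not_ge (Finset.mem_filter.mp hi).2))
  have hPbound : (∑ i ∈ Finset.univ.filter (fun i => 0 ≤ a i * b i / m i), a i * b i / m i)
      ≤ (∑ i, (a i + b i) ^ 2 / m i) / 4 := by
    calc (∑ i ∈ Finset.univ.filter (fun i => 0 ≤ a i * b i / m i), a i * b i / m i)
        ≤ ∑ i ∈ Finset.univ.filter (fun i => 0 ≤ a i * b i / m i), ((a i + b i) ^ 2 / m i) / 4 :=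
          Finset.sum_le_sum (fun i _ => key i)
      _ ≤ ∑ i, ((a i + b i) ^ 2 / m i) / 4 :=
          Finset.sum_le_sum_of_subset_of_nonneg (Finset.subset_univ _)
            (fun i _ _ => div_nonneg (div_nonneg (sq_nonneg _) (hm i).le) (by norm_num))
      _ = (∑ i, (a i + b i) ^ 2 / m i) / 4 := by rw [← Finset.sum_div]
  rw [habs]
  linarith [hsplit, h, hPbound]

set_option maxHeartbeats 2000000 in
theorem approx_newton_next_centrality (n : ℕ) (hn : 0 < n)
    (α δ : ℝ) (hα : α ∈ Set.Ioo (0:ℝ) 1) (hδ : 0 ≤ δ)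
    (Ht : Matrix (Fin n) (Fin n) ℝ) (hHt : Ht.PosSemidef)
    (lam : ℝ) (hlam : 0 ≤ lam)
    (Ω : Matrix (Fin n) (Fin n ⊕ Fin n) ℝ)
    (hΩ : Ω = Matrix.fromCols (1 : Matrix (Fin n) (Fin n) ℝ) (-1))
    (τ : ℝ) (hτ : 0 < τ)
    (x s xt st : Fin n ⊕ Fin n → ℝ)
    (hx : ∀ i, 0 < x i) (hs : ∀ i, 0 < s i)
    (hxt : ∀ i, 0 < xt i) (hst : ∀ i, 0 < st i)
    (hcen : euclEnorm (fun i => x i * s i - τ) ≤ α * τ)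
    (hratx : ∀ i, xt i / x i ∈ Set.Icc (1 / (1 + δ)) (1 + δ))
    (hrats : ∀ i, st i / s i ∈ Set.Icc (1 / (1 + δ)) (1 + δ))
    (Δz : Fin n → ℝ) (Δx Δs : Fin n ⊕ Fin n → ℝ)
    (heq1 : (2 * lam) • Ht.mulVec Δz + Ω.mulVec Δx = 0)
    (heq2 : Ωᵀ.mulVec Δz + Δs = 0)
    (heq3 : (fun i => st i * Δx i + xt i * Δs i) = fun i => τ - x i * s i)
    (xp sp : Fin n ⊕ Fin n → ℝ)
    (hxp : xp = x + Δx) (hsp : sp = s + Δs)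
    (σ : ℝ)
    (hσ : σ = Real.sqrt 2 * δ * (1 + δ) ^ 2 * α * Real.sqrt ((1 + α) / (1 - α))
      + (1 + δ) ^ 2 * α ^ 2 / (2 * (1 - α))) :
    euclEnorm (fun i => xp i * sp i - τ) ≤ σ * τ := by
  obtain ⟨hα0, hα1⟩ := hα
  have h1α : 0 < 1 - α := by linarith
  have h1δ : 0 < 1 + δ := by linarith
  -- componentwise centrality bounds
  have hS : ∑ i, (x i * s i - τ) ^ 2 ≤ (α * τ) ^ 2 := by
    have h0 : 0 ≤ ∑ i, (x i * s i - τ) ^ 2 := by positivity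
    have hc := hcen
    rw [euclEnorm] at hc
    nlinarith [Real.sq_sqrt h0, Real.sqrt_nonneg (∑ i, (x i * s i - τ) ^ 2)]
  have hcen_i : ∀ i, |x i * s i - τ| ≤ α * τ := by
    intro i
    have h1 : (x i * s i - τ) ^ 2 ≤ (α * τ) ^ 2 :=
      le_trans (Finset.single_le_sum (f := fun j => (x j * s j - τ) ^ 2)
        (fun j _ => sq_nonneg _) (Finset.mem_univ i)) hS
    have h2 := Real.sqrt_le_sqrt h1
    rwa [Real.sqrt_sq_eq_abs, Real.sqrt_sq (by positivity)] at h2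
  have hxs_lo : ∀ i, (1 - α) * τ ≤ x i * s i := by
    intro i; have := abs_le.mp (hcen_i i); nlinarith [this.1]
  have hxs_hi : ∀ i, x i * s i ≤ (1 + α) * τ := by
    intro i; have := abs_le.mp (hcen_i i); nlinarith [this.2]
  -- ratio bounds
  have hxtlo : ∀ i, x i / (1 + δ) ≤ xt i := by
    intro i
    have h := (hratx i).1
    rw [div_le_div_iff₀ h1δ (hx i)] at h
    rw [div_le_iff₀ h1δ]; linarith
  have hxthi : ∀ i, xt i ≤ (1 + δ) * x i := by
    intro i
    have h := (hratx i).2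
    rw [div_le_iff₀ (hx i)] at h; linarith
  have hstlo : ∀ i, s i / (1 + δ) ≤ st i := by
    intro i
    have h := (hrats i).1
    rw [div_le_div_iff₀ h1δ (hs i)] at h
    rw [div_le_iff₀ h1δ]; linarith
  have hsthi : ∀ i, st i ≤ (1 + δ) * s i := by
    intro i
    have h := (hrats i).2
    rw [div_le_iff₀ (hs i)] at h; linarith
  -- bounds on mm := xt*st
  have hmpos : ∀ i, (0:ℝ) < xt i * st i := fun i => mul_pos (hxt i) (hst i)
  have hm_lo : ∀ i, (1 - α) * τ / (1 + δ) ^ 2 ≤ xt i * st i := by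
    intro i
    have h1 := hxtlo i; have h2 := hstlo i
    have h3 : x i / (1 + δ) * (s i / (1 + δ)) ≤ xt i * st i :=
      mul_le_mul h1 h2 (div_nonneg (hs i).le h1δ.le) (hxt i).le
    have h4 : x i / (1 + δ) * (s i / (1 + δ)) = x i * s i / (1 + δ) ^ 2 := by
      rw [div_mul_div_comm, ← sq]
    have h5 : (1 - α) * τ / (1 + δ) ^ 2 ≤ x i * s i / (1 + δ) ^ 2 :=
      (div_le_div_iff_of_pos_right (pow_pos h1δ 2)).mpr (hxs_lo i)
    linarith [h5, h3, h4.symm.le]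
  have hm_hi : ∀ i, xt i * st i ≤ (1 + δ) ^ 2 * ((1 + α) * τ) := by
    intro i
    have t1 : xt i * st i ≤ ((1 + δ) * x i) * ((1 + δ) * s i) :=
      mul_le_mul (hxthi i) (hsthi i) (hst i).le (mul_pos h1δ (hx i)).le
    have t2 := mul_le_mul_of_nonneg_left (hxs_hi i) (sq_nonneg (1 + δ))
    nlinarith [t1, t2]
  -- closeness
  have hs_close : ∀ i, |s i - st i| ≤ δ * st i := by
    intro i
    rw [abs_le]
    constructor
    · rcases le_or_gt δ 1 with h | h
      · have u := mul_le_mul_of_nonneg_left (hsthi i) (sub_nonneg.mpr h)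
        have v := mul_nonneg (mul_nonneg hδ hδ) (hs i).le
        nlinarith [u, v]
      · linarith [hs i, mul_pos (hst i) (sub_pos.mpr h)]
    · have h7 := (div_le_iff₀ h1δ).mp (hstlo i)
      linarith [h7]
  have hx_close : ∀ i, |x i - xt i| ≤ δ * xt i := by
    intro i
    rw [abs_le]
    constructor
    · rcases le_or_gt δ 1 with h | h
      · have u := mul_le_mul_of_nonneg_left (hxthi i) (sub_nonneg.mpr h)
        have v := mul_nonneg (mul_nonneg hδ hδ) (hx i).le
        nlinarith [u, v]
      · linarith [hx i, mul_pos (hxt i) (sub_pos.mpr h)]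
    · have h7 := (div_le_iff₀ h1δ).mp (hxtlo i)
      linarith [h7]
  -- nonnegativity of Δx ⬝ᵥ Δs
  have hdot : 0 ≤ ∑ i, Δx i * Δs i := by
    have hΔs : Δs = -(Ωᵀ.mulVec Δz) := eq_neg_of_add_eq_zero_right heq2
    have hΩx : Ω.mulVec Δx = -((2 * lam) • Ht.mulVec Δz) := eq_neg_of_add_eq_zero_right heq1
    have e0 : ∑ i, Δx i * Δs i = Δx ⬝ᵥ Δs := rfl
    rw [e0, hΔs, dotProduct_neg, Matrix.dotProduct_mulVec, Matrix.vecMul_transpose,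
      hΩx, neg_dotProduct, neg_neg, smul_dotProduct, smul_eq_mul]
    have hq := hHt.dotProduct_mulVec_nonneg Δz
    simp only [star_trivial] at hq
    rw [dotProduct_comm]
    exact mul_nonneg (by linarith) hq
  set a : Fin n ⊕ Fin n → ℝ := fun i => st i * Δx i with ha
  set b : Fin n ⊕ Fin n → ℝ := fun i => xt i * Δs i with hb
  have hab : ∀ i, a i + b i = τ - x i * s i := fun i => congrFun heq3 i
  have habm : ∀ i, a i * b i / (xt i * st i) = Δx i * Δs i := by
    intro i
    show st i * Δx i * (xt i * Δs i) / (xt i * st i) = Δx i * Δs i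
    field_simp [(hxt i).ne', (hst i).ne']
  have hsum_q : 0 ≤ ∑ i, a i * b i / (xt i * st i) := by
    rw [Finset.sum_congr rfl fun i _ => habm i]
    exact hdot
  have habs_le : ∑ i, |a i * b i / (xt i * st i)| ≤ (∑ i, (a i + b i) ^ 2 / (xt i * st i)) / 2 :=
    weighted_abs_sum_le a b _ hmpos hsum_q
  set K := ∑ i, (a i + b i) ^ 2 / (xt i * st i) with hKdef
  have hK0 : 0 ≤ K := Finset.sum_nonneg fun i _ => div_nonneg (sq_nonneg _) (hmpos i).le
  have hKb : K ≤ (1 + δ) ^ 2 * α ^ 2 * τ / (1 - α) := by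
    have step : ∀ i, (a i + b i) ^ 2 / (xt i * st i)
        ≤ (1 + δ) ^ 2 / ((1 - α) * τ) * (x i * s i - τ) ^ 2 := by
      intro i
      rw [hab i, show (τ - x i * s i) ^ 2 = (x i * s i - τ) ^ 2 by ring,
        div_le_iff₀ (hmpos i)]
      have hfield : (1 + δ) ^ 2 * ((1 - α) * τ / (1 + δ) ^ 2) = (1 - α) * τ := by
        field_simp [h1δ.ne']
      have hCm : 1 ≤ (1 + δ) ^ 2 / ((1 - α) * τ) * (xt i * st i) := by
        rw [div_mul_eq_mul_div, le_div_iff₀ (by positivity)]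
        have h8 := mul_le_mul_of_nonneg_left (hm_lo i) (by positivity : (0:ℝ) ≤ (1 + δ) ^ 2)
        linarith [h8, hfield]
      nlinarith [mul_le_mul_of_nonneg_left hCm (sq_nonneg (x i * s i - τ))]
    calc K ≤ ∑ i, (1 + δ) ^ 2 / ((1 - α) * τ) * (x i * s i - τ) ^ 2 :=
        Finset.sum_le_sum fun i _ => step i
      _ = (1 + δ) ^ 2 / ((1 - α) * τ) * ∑ i, (x i * s i - τ) ^ 2 := by
        rw [Finset.mul_sum]
      _ ≤ (1 + δ) ^ 2 / ((1 - α) * τ) * (α * τ) ^ 2 :=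
        mul_le_mul_of_nonneg_left hS (by positivity)
      _ = (1 + δ) ^ 2 * α ^ 2 * τ / (1 - α) := by
        field_simp
  have hUV : ∑ i, (a i ^ 2 + b i ^ 2) / (xt i * st i) ≤ K := by
    rw [hKdef]
    have e : ∀ i, (a i + b i) ^ 2 / (xt i * st i)
        = (a i ^ 2 + b i ^ 2) / (xt i * st i) + 2 * (a i * b i / (xt i * st i)) := by
      intro i
      field_simp [(hmpos i).ne']
      ring
    rw [Finset.sum_congr rfl fun i _ => e i, Finset.sum_add_distrib]
    have h2 : 0 ≤ ∑ i, 2 * (a i * b i / (xt i * st i)) := by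
      rw [← Finset.mul_sum]; linarith
    linarith
  -- decomposition of the new product
  have hdecomp : (fun i => xp i * sp i - τ)
      = fun i => ((s i - st i) * Δx i + (x i - xt i) * Δs i) + Δx i * Δs i := by
    funext i
    have h3 := congrFun heq3 i
    simp only [hxp, hsp, Pi.add_apply]
    linear_combination h3
  rw [hdecomp]
  -- the quadratic term
  have hq2 : euclEnorm (fun i => Δx i * Δs i) ≤ (1 + δ) ^ 2 * α ^ 2 / (2 * (1 - α)) * τ := by
    have hT2 : (0:ℝ) ≤ (1 + δ) ^ 2 * α ^ 2 / (2 * (1 - α)) * τ :=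
      mul_nonneg (div_nonneg (by positivity) (by linarith)) hτ.le
    apply enorm_le_of_sq_le hT2
    have e1 : ∑ i, (Δx i * Δs i) ^ 2 ≤ (∑ i, |Δx i * Δs i|) ^ 2 := by
      calc ∑ i, (Δx i * Δs i) ^ 2 = ∑ i, |Δx i * Δs i| ^ 2 :=
            Finset.sum_congr rfl fun i _ => (sq_abs _).symm
        _ ≤ (∑ i, |Δx i * Δs i|) ^ 2 :=
            Finset.sum_sq_le_sq_sum_of_nonneg fun i _ => abs_nonneg _
    have e3 : ∑ i, |Δx i * Δs i| ≤ (1 + δ) ^ 2 * α ^ 2 / (2 * (1 - α)) * τ := by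
      have e2 : ∑ i, |Δx i * Δs i| = ∑ i, |a i * b i / (xt i * st i)| :=
        Finset.sum_congr rfl fun i _ => by rw [habm i]
      rw [e2]
      refine habs_le.trans ?_
      rw [div_le_iff₀ (by norm_num : (0:ℝ) < 2)]
      have e4 : (1 + δ) ^ 2 * α ^ 2 / (2 * (1 - α)) * τ * 2
          = (1 + δ) ^ 2 * α ^ 2 * τ / (1 - α) := by
        field_simp
      rw [e4]
      exact hKb
    calc ∑ i, (Δx i * Δs i) ^ 2 ≤ (∑ i, |Δx i * Δs i|) ^ 2 := e1
      _ ≤ ((1 + δ) ^ 2 * α ^ 2 / (2 * (1 - α)) * τ) ^ 2 :=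
          pow_le_pow_left₀ (Finset.sum_nonneg fun i _ => abs_nonneg _) e3 2
  -- the error term
  have hw : euclEnorm (fun i => (s i - st i) * Δx i + (x i - xt i) * Δs i)
      ≤ Real.sqrt 2 * δ * (1 + δ) ^ 2 * α * Real.sqrt ((1 + α) / (1 - α)) * τ := by
    have hT1 : (0:ℝ) ≤ Real.sqrt 2 * δ * (1 + δ) ^ 2 * α * Real.sqrt ((1 + α) / (1 - α)) * τ :=
      mul_nonneg (mul_nonneg (mul_nonneg (mul_nonneg (mul_nonneg
        (Real.sqrt_nonneg 2) hδ) (sq_nonneg _)) hα0.le) (Real.sqrt_nonneg _)) hτ.le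
    apply enorm_le_of_sq_le hT1
    have hwb : ∀ i, ((s i - st i) * Δx i + (x i - xt i) * Δs i) ^ 2
        ≤ 2 * δ ^ 2 * (a i ^ 2 + b i ^ 2) := by
      intro i
      have ha1 : |a i| = st i * |Δx i| := by
        show |st i * Δx i| = st i * |Δx i|
        rw [abs_mul, abs_of_pos (hst i)]
      have hb1 : |b i| = xt i * |Δs i| := by
        show |xt i * Δs i| = xt i * |Δs i|
        rw [abs_mul, abs_of_pos (hxt i)]
      have h1 : |(s i - st i) * Δx i + (x i - xt i) * Δs i| ≤ δ * |a i| + δ * |b i| := by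
        calc |(s i - st i) * Δx i + (x i - xt i) * Δs i|
            ≤ |(s i - st i) * Δx i| + |(x i - xt i) * Δs i| := abs_add_le _ _
          _ ≤ δ * |a i| + δ * |b i| := by
              rw [abs_mul, abs_mul, ha1, hb1]
              apply add_le_add
              · calc |s i - st i| * |Δx i| ≤ (δ * st i) * |Δx i| :=
                      mul_le_mul_of_nonneg_right (hs_close i) (abs_nonneg _)
                  _ = δ * (st i * |Δx i|) := by ring
              · calc |x i - xt i| * |Δs i| ≤ (δ * xt i) * |Δs i| :=
                      mul_le_mul_of_nonneg_right (hx_close i) (abs_nonneg _)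
                  _ = δ * (xt i * |Δs i|) := by ring
      have h2 : ((s i - st i) * Δx i + (x i - xt i) * Δs i) ^ 2 ≤ (δ * |a i| + δ * |b i|) ^ 2 := by
        have h2' := pow_le_pow_left₀ (abs_nonneg _) h1 2
        rwa [sq_abs] at h2'
      have h3 : (δ * |a i| + δ * |b i|) ^ 2 ≤ 2 * δ ^ 2 * (a i ^ 2 + b i ^ 2) := by
        nlinarith [mul_nonneg (sq_nonneg δ) (sq_nonneg (|a i| - |b i|)), sq_abs (a i),
          sq_abs (b i)]
      linarith
    have h5 : ∀ i, a i ^ 2 + b i ^ 2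
        ≤ (1 + δ) ^ 2 * ((1 + α) * τ) * ((a i ^ 2 + b i ^ 2) / (xt i * st i)) := by
      intro i
      have hr : 0 ≤ (a i ^ 2 + b i ^ 2) / (xt i * st i) :=
        div_nonneg (by positivity) (hmpos i).le
      have h4 : a i ^ 2 + b i ^ 2
          = (a i ^ 2 + b i ^ 2) / (xt i * st i) * (xt i * st i) :=
        (div_mul_cancel₀ _ (hmpos i).ne').symm
      have h6 := mul_le_mul_of_nonneg_right (hm_hi i) hr
      linarith [h4, h6]
    have hsum1 : ∑ i, (a i ^ 2 + b i ^ 2)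
        ≤ (1 + δ) ^ 2 * ((1 + α) * τ) * ∑ i, (a i ^ 2 + b i ^ 2) / (xt i * st i) := by
      rw [Finset.mul_sum]
      exact Finset.sum_le_sum fun i _ => h5 i
    have hBm : (0:ℝ) ≤ (1 + δ) ^ 2 * ((1 + α) * τ) := by positivity
    calc ∑ i, ((s i - st i) * Δx i + (x i - xt i) * Δs i) ^ 2
        ≤ ∑ i, 2 * δ ^ 2 * (a i ^ 2 + b i ^ 2) := Finset.sum_le_sum fun i _ => hwb i
      _ = 2 * δ ^ 2 * ∑ i, (a i ^ 2 + b i ^ 2) := by rw [Finset.mul_sum]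
      _ ≤ 2 * δ ^ 2 * ((1 + δ) ^ 2 * ((1 + α) * τ) * K) := by
          apply mul_le_mul_of_nonneg_left _ (by positivity : (0:ℝ) ≤ 2 * δ ^ 2)
          exact hsum1.trans (mul_le_mul_of_nonneg_left hUV hBm)
      _ ≤ 2 * δ ^ 2 * ((1 + δ) ^ 2 * ((1 + α) * τ) * ((1 + δ) ^ 2 * α ^ 2 * τ / (1 - α))) := by
          apply mul_le_mul_of_nonneg_left _ (by positivity : (0:ℝ) ≤ 2 * δ ^ 2)
          exact mul_le_mul_of_nonneg_left hKb hBm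
      _ = (Real.sqrt 2 * δ * (1 + δ) ^ 2 * α * Real.sqrt ((1 + α) / (1 - α)) * τ) ^ 2 := by
          have e2 : Real.sqrt 2 ^ 2 = 2 := Real.sq_sqrt (by norm_num)
          have e3 : Real.sqrt ((1 + α) / (1 - α)) ^ 2 = (1 + α) / (1 - α) :=
            Real.sq_sqrt (div_nonneg (by linarith) h1α.le)
          have e5 : (Real.sqrt 2 * δ * (1 + δ) ^ 2 * α * Real.sqrt ((1 + α) / (1 - α)) * τ) ^ 2
              = Real.sqrt 2 ^ 2 * Real.sqrt ((1 + α) / (1 - α)) ^ 2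
                * (δ ^ 2 * ((1 + δ) ^ 2) ^ 2 * α ^ 2 * τ ^ 2) := by ring
          rw [e5, e2, e3]
          field_simp
  calc euclEnorm (fun i => ((s i - st i) * Δx i + (x i - xt i) * Δs i) + Δx i * Δs i)
      ≤ euclEnorm (fun i => (s i - st i) * Δx i + (x i - xt i) * Δs i)
        + euclEnorm (fun i => Δx i * Δs i) := enorm_triangle _ _
    _ ≤ Real.sqrt 2 * δ * (1 + δ) ^ 2 * α * Real.sqrt ((1 + α) / (1 - α)) * τ
        + (1 + δ) ^ 2 * α ^ 2 / (2 * (1 - α)) * τ := add_le_add hw hq2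
    _ = σ * τ := by rw [hσ]; ring
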